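/- Let (e,h,f) be an sl₂-triple in Matrix (Fin n) (Fin n) ℂ and let U₂ := {(f*C - C*f, f*D + D*f) : C, D : Matrix (Fin n) (Fin n) ℂ} be the subspace of pairs representing Π[g,F]. Define the bilinear form ω_χ((A,B),(A',B')) := Matrix.trace (e * (A*A' - A'*A + B*B' + B'*B)). Then ω_χ restricted to U₂ is non-degenerate: if (A,B) ∈ U₂ and ω_χ((A,B),(A',B')) = 0 for all (A',B') ∈ U₂, then A = 0 and B = 0. -/

import Mathlib

/-- The subspace `Π[g, F]` in the pair model of the queer Lie superalgebra `q(n)`,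
where `F = (0, f)` and `Π` is the parity flip: pairs of the form
`(f*C - C*f, f*D + D*f)`. -/
def piBracketF {n : ℕ} (f : Matrix (Fin n) (Fin n) ℂ) :
    Set (Matrix (Fin n) (Fin n) ℂ × Matrix (Fin n) (Fin n) ℂ) :=
  {p | ∃ C D : Matrix (Fin n) (Fin n) ℂ, p = (f * C - C * f, f * D + D * f)}

/-- The bilinear form `ω_χ(x, y) = χ([x, y])` on the pair model of `q(n)`, where
`χ(A, B) = trace (e*A)`. -/
noncomputable def omegaChi {n : ℕ} (e : Matrix (Fin n) (Fin n) ℂ)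
    (x y : Matrix (Fin n) (Fin n) ℂ × Matrix (Fin n) (Fin n) ℂ) : ℂ :=
  Matrix.trace (e * (x.1 * y.1 - y.1 * x.1 + x.2 * y.2 + y.2 * x.2))

namespace QSl2Aux

open Module LinearMap Set

variable {V : Type*} [AddCommGroup V] [Module ℂ V] [FiniteDimensional ℂ V]

/-- Shifted mapsTo: if `H*F = F*H + c•F` then `F` maps the generalized `μ`-eigenspace of `H`
into the generalized `μ+c`-eigenspace. -/
lemma mapsTo_shift (H F : Module.End ℂ V) (c μ : ℂ) (hc : H * F = F * H + c • F) :
    Set.MapsTo F (H.maxGenEigenspace μ) (H.maxGenEigenspace (μ + c)) := by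
  have hkey : (H - (μ + c) • 1) * F = F * (H - μ • 1) := by
    rw [sub_mul, mul_sub, hc, smul_mul_assoc, one_mul, mul_smul_comm, mul_one, add_smul]
    abel
  have pkey : ∀ k : ℕ, (H - (μ + c) • 1) ^ k * F = F * (H - μ • 1) ^ k := by
    intro k
    induction k with
    | zero => simp
    | succ k ih => rw [pow_succ, pow_succ, mul_assoc, hkey, ← mul_assoc, ih, mul_assoc]
  intro x hx
  rw [SetLike.mem_coe, Module.End.mem_maxGenEigenspace] at hx ⊢
  obtain ⟨k, hk⟩ := hx
  refine ⟨k, ?_⟩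
  have h2 : ((H - (μ + c) • 1) ^ k * F) x = (F * (H - μ • 1) ^ k) x := by rw [pkey]
  simpa [Module.End.mul_apply, hk] using h2

lemma eig_eq_of_mem_maxGen {H : Module.End ℂ V} {M μ : ℂ} {x : V}
    (hx : x ∈ H.maxGenEigenspace M) (hx0 : x ≠ 0) (hHx : H x = μ • x) : μ = M := by
  obtain ⟨k, hk⟩ := (Module.End.mem_maxGenEigenspace _ _ _).mp hx
  have hpow : ∀ j : ℕ, ((H - M • 1) ^ j) x = (μ - M) ^ j • x := by
    intro j
    induction j with
    | zero => simp
    | succ j ih =>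
      rw [pow_succ', Module.End.mul_apply, ih, map_smul]
      have h1 : (H - M • (1 : Module.End ℂ V)) x = (μ - M) • x := by
        simp [LinearMap.sub_apply, hHx, sub_smul]
      rw [h1, smul_smul, ← pow_succ]
  rw [hpow k] at hk
  have h2 : (μ - M) ^ k = 0 := (smul_eq_zero.mp hk).resolve_right hx0
  have h3 : μ - M = 0 := pow_eq_zero_iff'.mp h2 |>.1
  exact sub_eq_zero.mp h3

lemma exists_common_eig (A B : Module.End ℂ V) (hAB : Commute A B)
    (K : Submodule ℂ V) (hK : K ≠ ⊥) (hA : ∀ x ∈ K, A x ∈ K) (hB : ∀ x ∈ K, B x ∈ K) :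
    ∃ (μ γ : ℂ) (v : V), v ∈ K ∧ v ≠ 0 ∧ A v = μ • v ∧ B v = γ • v := by
  haveI : Nontrivial K := Submodule.nontrivial_iff_ne_bot.mpr hK
  set A' : Module.End ℂ K := A.restrict hA with hA'
  set B' : Module.End ℂ K := B.restrict hB with hB'
  have hcomm : Commute A' B' := by
    apply LinearMap.ext
    intro x
    apply Subtype.val_injective
    have := LinearMap.congr_fun hAB.eq (x : V)
    simpa [Module.End.mul_apply, hA', hB', LinearMap.restrict_apply] using this
  obtain ⟨μ, hμ⟩ := Module.End.exists_eigenvalue A'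
  obtain ⟨v₁, hv₁⟩ := hμ.exists_hasEigenvector
  have hmaps : Set.MapsTo B' (A'.eigenspace μ) (A'.eigenspace μ) :=
    Module.End.mapsTo_genEigenspace_of_comm hcomm μ 1
  haveI : Nontrivial (A'.eigenspace μ) := by
    apply Submodule.nontrivial_iff_ne_bot.mpr
    exact (Submodule.ne_bot_iff _).mpr ⟨v₁, hv₁.1, hv₁.2⟩
  obtain ⟨γ, hγ⟩ := Module.End.exists_eigenvalue (B'.restrict hmaps)
  obtain ⟨w, hw⟩ := hγ.exists_hasEigenvector
  refine ⟨μ, γ, ((w : K) : V), (w : K).2, ?_, ?_, ?_⟩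
  · intro h0
    exact hw.2 (Subtype.val_injective (Subtype.val_injective h0))
  · have hmem : (w : K) ∈ A'.eigenspace μ := w.2
    have h4 := Module.End.mem_eigenspace_iff.mp hmem
    have h5 := congrArg Subtype.val h4
    simpa [hA', LinearMap.restrict_apply] using h5
  · have h4 := Module.End.mem_eigenspace_iff.mp hw.1
    have h5 := congrArg Subtype.val (congrArg Subtype.val h4)
    simpa [hB', LinearMap.restrict_apply] using h5

lemma exists_finsupp_decomp (H : Module.End ℂ V) (U : Submodule ℂ V)
    (hU : ∀ x ∈ U, H x ∈ U) {w : V} (hw : w ∈ U) :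
    ∃ d : ℂ →₀ V, (∀ μ, d μ ∈ H.maxGenEigenspace μ ⊓ U) ∧ (d.sum fun _ x => x) = w := by
  classical
  set H' : Module.End ℂ U := H.restrict hU with hH'
  have htop : (⟨w, hw⟩ : U) ∈ ⨆ μ, H'.maxGenEigenspace μ := by
    rw [Module.End.iSup_maxGenEigenspace_eq_top H']; trivial
  rw [Submodule.mem_iSup_iff_exists_finsupp] at htop
  obtain ⟨d', hd', hsum⟩ := htop
  refine ⟨Finsupp.mapRange (α := ℂ) (M := U) (N := V) Subtype.val rfl d', fun μ => ?_, ?_⟩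
  · rw [Finsupp.mapRange_apply]
    have hmem : ((d' μ : U) : V) ∈ U ⊓ H.genEigenspace μ ⊤ := by
      rw [Submodule.inf_genEigenspace H U hU]
      exact ⟨d' μ, hd' μ, rfl⟩
    exact ⟨hmem.2, hmem.1⟩
  · rw [Finsupp.sum_mapRange_index (fun _ => rfl)]
    have h2 := congrArg (Submodule.subtype U) hsum
    rw [map_finsuppSum] at h2
    simpa using h2

/-- An eigenvector for `h` killed by `e` in an `sl₂`-triple of endomorphisms has
natural-number eigenvalue. -/
lemma nat_eigen (E H F : Module.End ℂ V) (hH0 : H ≠ 0)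
    (hE : H * E - E * H = 2 • E) (hF : H * F - F * H = -(2 • F))
    (hH : E * F - F * E = H) {v : V} (hv : v ≠ 0) {μ : ℂ}
    (hHv : H v = μ • v) (hEv : E v = 0) : ∃ m : ℕ, μ = m := by
  letI : LieRing (Module.End ℂ V) := LieRing.ofAssociativeRing
  have t : IsSl2Triple (L := Module.End ℂ V) H E F :=
    ⟨hH0, by rw [Ring.lie_def]; exact hH, by rw [Ring.lie_def]; exact hE,
      by rw [Ring.lie_def]; exact hF⟩
  have P : t.HasPrimitiveVectorWith v μ :=
    ⟨hv, by simpa using hHv, by simpa using hEv⟩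
  exact P.exists_nat

/-- Key lemma: for an `sl₂`-triple of endomorphisms, `ker E ∩ range F = 0`. -/
lemma key (E H F : Module.End ℂ V)
    (hE : H * E = E * H + (2 : ℂ) • E) (hF : H * F = F * H - (2 : ℂ) • F)
    (hH : E * F = F * E + H) :
    ∀ v ∈ LinearMap.range F, E v = 0 → v = 0 := by
  have hcast : ∀ (a : Module.End ℂ V), (2 : ℂ) • a = 2 • a := fun a => by
    rw [two_smul, two_nsmul]
  by_cases hH0 : H = 0
  · subst hH0
    have hF0 : F = 0 := by
      have h2 : (0 : Module.End ℂ V) = F * 0 - (2 : ℂ) • F := by rw [← hF, zero_mul]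
      rw [mul_zero, zero_sub] at h2
      have h3 : (2 : ℂ) • F = 0 := by rw [← neg_eq_zero, ← h2]
      simpa [smul_eq_zero] using h3
    rintro v ⟨w, rfl⟩ _
    rw [hF0]; simp
  intro v hvr hvE
  by_contra hv0
  classical
  -- rewrite rules
  have rE : ∀ X : Module.End ℂ V, H * (E * X) = E * (H * X) + (2 : ℂ) • (E * X) := fun X => by
    rw [← mul_assoc, hE, add_mul, mul_assoc, smul_mul_assoc]
  have rF : ∀ X : Module.End ℂ V, H * (F * X) = F * (H * X) - (2 : ℂ) • (F * X) := fun X => by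
    rw [← mul_assoc, hF, sub_mul, mul_assoc, smul_mul_assoc]
  have rH : ∀ X : Module.End ℂ V, E * (F * X) = F * (E * X) + H * X := fun X => by
    rw [← mul_assoc, hH, add_mul, mul_assoc]
  set Cas : Module.End ℂ V := (2 : ℂ) • (E * F) + (2 : ℂ) • (F * E) + H * H with hCasDef
  have commCE : Commute Cas E := by
    show Cas * E = E * Cas
    rw [hCasDef]
    simp only [add_mul, mul_add, smul_mul_assoc, mul_smul_comm, mul_assoc, rE, rF, rH, hE, hF,
      hH, smul_add, smul_sub, mul_sub, sub_mul, mul_add, add_mul]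
    module
  have commCF : Commute Cas F := by
    show Cas * F = F * Cas
    rw [hCasDef]
    simp only [add_mul, mul_add, smul_mul_assoc, mul_smul_comm, mul_assoc, rE, rF, rH, hE, hF,
      hH, smul_add, smul_sub, mul_sub, sub_mul, mul_add, add_mul]
    module
  have commCH : Commute Cas H := by
    show Cas * H = H * Cas
    rw [hCasDef]
    simp only [add_mul, mul_add, smul_mul_assoc, mul_smul_comm, mul_assoc, rE, rF, rH, hE, hF,
      hH, smul_add, smul_sub, mul_sub, sub_mul, mul_add, add_mul]
    module
  -- pointwise Casimir identity on ker E
  have casKer : ∀ (μ : ℂ) (x : V), E x = 0 → H x = μ • x → Cas x = (μ ^ 2 + 2 * μ) • x := by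
    intro μ x hEx hHx
    have hEFx : E (F x) = μ • x := by
      have h3 := LinearMap.congr_fun hH x
      simpa [Module.End.mul_apply, hEx, hHx] using h3
    have h4 : Cas x = (2 : ℂ) • (E (F x)) + (2 : ℂ) • (F (E x)) + H (H x) := by
      simp [hCasDef, Module.End.mul_apply]
    rw [h4, hEFx, hEx, hHx, map_zero, smul_zero, map_smul, hHx, smul_smul, smul_smul]
    module
  -- the subspace K = ker E ⊓ range F
  set K : Submodule ℂ V := LinearMap.ker E ⊓ LinearMap.range F with hKdef
  have hvK : v ∈ K := ⟨hvE, hvr⟩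
  have hKbot : K ≠ ⊥ := by
    intro hb
    rw [hb, Submodule.mem_bot] at hvK
    exact hv0 hvK
  have hEkerH : ∀ x : V, E x = 0 → E (H x) = 0 := by
    intro x hx
    have h3 := LinearMap.congr_fun hE x
    simp only [Module.End.mul_apply, LinearMap.add_apply, LinearMap.smul_apply, hx, map_zero,
      smul_zero, add_zero] at h3
    exact h3.symm
  have hEkerC : ∀ x : V, E x = 0 → E (Cas x) = 0 := by
    intro x hx
    have h3 := LinearMap.congr_fun commCE.eq x
    rw [Module.End.mul_apply, Module.End.mul_apply] at h3
    rw [← h3, hx, map_zero]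
  have hHK : ∀ x ∈ K, H x ∈ K := by
    rintro x ⟨hx1, y, rfl⟩
    refine ⟨hEkerH _ hx1, ⟨H y - (2 : ℂ) • y, ?_⟩⟩
    have h3 := LinearMap.congr_fun hF y
    simp only [Module.End.mul_apply, LinearMap.sub_apply, LinearMap.smul_apply] at h3
    rw [map_sub, map_smul, ← h3]

  have hCK : ∀ x ∈ K, Cas x ∈ K := by
    rintro x ⟨hx1, y, rfl⟩
    refine ⟨hEkerC _ hx1, ⟨Cas y, ?_⟩⟩
    have h3 := LinearMap.congr_fun commCF.eq y
    rw [Module.End.mul_apply, Module.End.mul_apply] at h3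
    exact h3.symm
  obtain ⟨μ, γ, v₀, hv₀K, hv₀0, hHv₀, hCv₀⟩ :=
    exists_common_eig H Cas commCH.symm K hKbot hHK hCK
  have hEv₀ : E v₀ = 0 := hv₀K.1
  obtain ⟨w, hw⟩ := hv₀K.2
  have hγ : γ = μ ^ 2 + 2 * μ := by
    have h3 := casKer μ v₀ hEv₀ hHv₀
    rw [hCv₀] at h3
    have h4 : (γ - (μ ^ 2 + 2 * μ)) • v₀ = 0 := by rw [sub_smul, h3, sub_self]
    exact sub_eq_zero.mp ((smul_eq_zero.mp h4).resolve_right hv₀0)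
  obtain ⟨m, hm⟩ : ∃ m : ℕ, μ = m := by
    refine nat_eigen E H F hH0 ?_ ?_ ?_ hv₀0 hHv₀ hEv₀
    · rw [hE, ← hcast]; abel
    · rw [hF, ← hcast]; abel
    · rw [hH]; abel
  -- v₀ is a genuine eigenvector, hence in the maximal generalized eigenspaces
  have hv₀W : v₀ ∈ H.maxGenEigenspace μ := by
    rw [Module.End.mem_maxGenEigenspace]
    exact ⟨1, by simp [LinearMap.sub_apply, hHv₀]⟩
  have hv₀U : v₀ ∈ Cas.maxGenEigenspace γ := by
    rw [Module.End.mem_maxGenEigenspace]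
    exact ⟨1, by simp [LinearMap.sub_apply, hCv₀]⟩
  -- Stage 1: find w₁ ∈ U := maxGen Cas γ with F w₁ = v₀
  have hindC := Module.End.independent_maxGenEigenspace Cas
  have hindH := Module.End.independent_maxGenEigenspace H
  obtain ⟨w₁, hw₁U, hFw₁⟩ : ∃ w₁, w₁ ∈ Cas.maxGenEigenspace γ ∧ F w₁ = v₀ := by
    have htopC : w ∈ ⨆ γ', Cas.maxGenEigenspace γ' := by
      rw [Module.End.iSup_maxGenEigenspace_eq_top]; trivial
    rw [Submodule.mem_iSup_iff_exists_finsupp] at htopC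
    obtain ⟨c, hc, hcsum⟩ := htopC
    set s' : Finset ℂ := insert γ c.support with hs'
    have hγs' : γ ∈ s' := Finset.mem_insert_self _ _
    have hsum1 : ∑ γ' ∈ s', F (c γ') = v₀ := by
      rw [hs', Finset.sum_insert_of_eq_zero_if_notMem
        (fun hns => by rw [Finsupp.notMem_support_iff.mp hns, map_zero])]
      rw [← map_sum]
      rw [show ∑ γ' ∈ c.support, c γ' = c.sum fun _ x => x from rfl, hcsum, hw]
    have hFcmem : ∀ γ', F (c γ') ∈ Cas.maxGenEigenspace γ' := fun γ' =>
      Module.End.mapsTo_maxGenEigenspace_of_comm commCF γ' (hc γ')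
    have hdiff1 : v₀ - F (c γ) ∈ Cas.maxGenEigenspace γ := sub_mem hv₀U (hFcmem γ)
    have hdiff2 : v₀ - F (c γ) ∈ ⨆ γ' ≠ γ, Cas.maxGenEigenspace γ' := by
      have heq : v₀ - F (c γ) = ∑ γ' ∈ s'.erase γ, F (c γ') := by
        rw [← hsum1, ← Finset.add_sum_erase s' (fun γ' => F (c γ')) hγs', add_sub_cancel_left]
      rw [heq]
      refine Submodule.sum_mem _ fun γ' hγ' => ?_
      have hne : γ' ≠ γ := (Finset.mem_erase.mp hγ').1
      exact Submodule.mem_iSup_of_mem γ' (Submodule.mem_iSup_of_mem hne (hFcmem γ'))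
    have h0 : v₀ - F (c γ) = 0 :=
      Submodule.disjoint_def.mp (hindC γ) _ hdiff1 hdiff2
    exact ⟨c γ, hc γ, (sub_eq_zero.mp h0).symm⟩
  -- Stage 2: find w' ∈ maxGen H (μ+2) ⊓ U with F w' = v₀
  have hHU : ∀ x ∈ Cas.maxGenEigenspace γ, H x ∈ Cas.maxGenEigenspace γ := fun x hx =>
    Module.End.mapsTo_maxGenEigenspace_of_comm commCH γ hx
  have hFshift : ∀ ν : ℂ, Set.MapsTo F (H.maxGenEigenspace ν) (H.maxGenEigenspace (ν + (-2))) := by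
    intro ν
    refine mapsTo_shift H F (-2) ν ?_
    rw [hF]
    module
  have hEshift : ∀ ν : ℂ, Set.MapsTo E (H.maxGenEigenspace ν) (H.maxGenEigenspace (ν + 2)) := by
    intro ν
    exact mapsTo_shift H E 2 ν hE
  obtain ⟨w', hw'mem, hFw'⟩ : ∃ w', w' ∈ H.maxGenEigenspace (μ + 2) ⊓ Cas.maxGenEigenspace γ ∧
      F w' = v₀ := by
    obtain ⟨d, hd, hdsum⟩ := exists_finsupp_decomp H (Cas.maxGenEigenspace γ) hHU hw₁U
    set s'' : Finset ℂ := insert (μ + 2) d.support with hs''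
    have hνs'' : (μ + 2) ∈ s'' := Finset.mem_insert_self _ _
    have hsum2 : ∑ ν ∈ s'', F (d ν) = v₀ := by
      rw [hs'', Finset.sum_insert_of_eq_zero_if_notMem
        (fun hns => by rw [Finsupp.notMem_support_iff.mp hns, map_zero])]
      rw [← map_sum]
      rw [show ∑ ν ∈ d.support, d ν = d.sum fun _ x => x from rfl, hdsum, hFw₁]
    have hFdmem : ∀ ν, F (d ν) ∈ H.maxGenEigenspace (ν + (-2)) := fun ν =>
      hFshift ν (hd ν).1
    have hFd' : F (d (μ + 2)) ∈ H.maxGenEigenspace μ := by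
      have := hFdmem (μ + 2)
      rwa [show μ + 2 + (-2) = μ by ring] at this
    have hdiff1 : v₀ - F (d (μ + 2)) ∈ H.maxGenEigenspace μ := sub_mem hv₀W hFd'
    have hdiff2 : v₀ - F (d (μ + 2)) ∈ ⨆ ν ≠ μ, H.maxGenEigenspace ν := by
      have heq : v₀ - F (d (μ + 2)) = ∑ ν ∈ s''.erase (μ + 2), F (d ν) := by
        rw [← hsum2, ← Finset.add_sum_erase s'' (fun ν => F (d ν)) hνs'', add_sub_cancel_left]
      rw [heq]
      refine Submodule.sum_mem _ fun ν hν => ?_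
      have hne : ν ≠ μ + 2 := (Finset.mem_erase.mp hν).1
      have hne2 : ν + (-2) ≠ μ := by
        intro hcon
        apply hne
        linear_combination hcon
      exact Submodule.mem_iSup_of_mem (ν + (-2))
        (Submodule.mem_iSup_of_mem hne2 (hFdmem ν))
    have h0 : v₀ - F (d (μ + 2)) = 0 :=
      Submodule.disjoint_def.mp (hindH μ) _ hdiff1 hdiff2
    exact ⟨d (μ + 2), ⟨(hd (μ + 2)).1, (hd (μ + 2)).2⟩, (sub_eq_zero.mp h0).symm⟩
  have hw'0 : w' ≠ 0 := by
    intro hcon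
    rw [hcon, map_zero] at hFw'
    exact hv₀0 hFw'.symm
  -- Stage 3: E-chain
  have hEmem : ∀ k : ℕ, (E ^ k) w' ∈
      H.maxGenEigenspace (μ + 2 + 2 * k) ⊓ Cas.maxGenEigenspace γ := by
    intro k
    induction k with
    | zero => simpa using hw'mem
    | succ k ih =>
      have hstep : (E ^ (k + 1)) w' = E ((E ^ k) w') := by
        rw [pow_succ', Module.End.mul_apply]
      rw [hstep]
      constructor
      · have := hEshift (μ + 2 + 2 * k) ih.1
        rwa [show μ + 2 + 2 * (k : ℂ) + 2 = μ + 2 + 2 * ((k : ℕ) + 1 : ℕ) by push_cast; ring]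
          at this
      · exact Module.End.mapsTo_maxGenEigenspace_of_comm commCE γ ih.2
  have hzero : ∃ k, (E ^ k) w' = 0 := by
    by_contra hcon
    push_neg at hcon
    have hinj : Function.Injective (fun k : ℕ => μ + 2 + 2 * (k : ℂ)) := by
      intro a b hab
      simp only at hab
      have : (a : ℂ) = b := by linear_combination hab / 2
      exact_mod_cast this
    have hind2 := hindH.comp hinj
    have hli := hind2.linearIndependent
      (fun k : ℕ => H.maxGenEigenspace (μ + 2 + 2 * (k : ℂ)))
      (fun k => (hEmem k).1) hcon
    exact absurd hli.finite (not_finite_iff_infinite.mpr inferInstance)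
  have h00 : ¬ ((E ^ 0) w' = 0) := by simpa using hw'0
  set k₀ := Nat.find hzero with hk₀
  have hk₀0 : k₀ ≠ 0 := by
    intro hcon
    exact h00 (by rw [← hcon]; exact Nat.find_spec hzero)
  set p := k₀ - 1 with hp
  have hp1 : (E ^ p) w' ≠ 0 := Nat.find_min hzero (by omega)
  have hp2 : (E ^ (p + 1)) w' = 0 := by
    have : p + 1 = k₀ := by omega
    rw [this]
    exact Nat.find_spec hzero
  set z := (E ^ p) w' with hz
  have hzE : E z = 0 := by
    rw [hz, ← Module.End.mul_apply, ← pow_succ']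
    exact hp2
  set Mv : ℂ := μ + 2 + 2 * p with hMv
  have hzW : z ∈ H.maxGenEigenspace Mv ⊓ Cas.maxGenEigenspace γ := hEmem p
  -- K' and the final eigenvector
  set K' : Submodule ℂ V := LinearMap.ker E ⊓
    (H.maxGenEigenspace Mv ⊓ Cas.maxGenEigenspace γ) with hK'def
  have hzK' : z ∈ K' := ⟨hzE, hzW⟩
  have hK'bot : K' ≠ ⊥ := by
    intro hb
    rw [hb, Submodule.mem_bot] at hzK'
    exact hp1 hzK'
  have hHK' : ∀ x ∈ K', H x ∈ K' := by
    rintro x ⟨hx1, hx2, hx3⟩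
    exact ⟨hEkerH _ hx1,
      Module.End.mapsTo_maxGenEigenspace_of_comm (Commute.refl H) Mv hx2,
      Module.End.mapsTo_maxGenEigenspace_of_comm commCH γ hx3⟩
  have hCK' : ∀ x ∈ K', Cas x ∈ K' := by
    rintro x ⟨hx1, hx2, hx3⟩
    exact ⟨hEkerC _ hx1,
      Module.End.mapsTo_maxGenEigenspace_of_comm commCH.symm Mv hx2,
      Module.End.mapsTo_maxGenEigenspace_of_comm (Commute.refl Cas) γ hx3⟩
  obtain ⟨μ₂, γ₂, z₀, hz₀K, hz₀0, hHz₀, hCz₀⟩ :=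
    exists_common_eig H Cas commCH.symm K' hK'bot hHK' hCK'
  have hμ₂ : μ₂ = Mv := eig_eq_of_mem_maxGen hz₀K.2.1 hz₀0 hHz₀
  have hγ₂ : γ₂ = γ := eig_eq_of_mem_maxGen hz₀K.2.2 hz₀0 hCz₀
  have hγ' : γ = Mv ^ 2 + 2 * Mv := by
    have h3 := casKer μ₂ z₀ hz₀K.1 hHz₀
    rw [hCz₀] at h3
    have h4 : (γ₂ - (μ₂ ^ 2 + 2 * μ₂)) • z₀ = 0 := by rw [sub_smul, h3, sub_self]
    have h5 := sub_eq_zero.mp ((smul_eq_zero.mp h4).resolve_right hz₀0)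
    rw [← hγ₂, ← hμ₂, h5]
  -- contradiction
  have hfinal : (μ - Mv) * (μ + Mv + 2) = 0 := by
    have := hγ.symm.trans hγ'
    linear_combination this
  have hne1 : μ - Mv ≠ 0 := by
    rw [hMv]
    intro hcon
    have h6 : (2 : ℂ) + 2 * p = 0 := by linear_combination -hcon
    have h7 : ((2 + 2 * p : ℕ) : ℂ) = 0 := by push_cast; linear_combination h6
    rw [Nat.cast_eq_zero] at h7
    omega
  have hne2 : μ + Mv + 2 = 0 := by
    rcases mul_eq_zero.mp hfinal with h | h
    · exact absurd h hne1
    · exact h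
  rw [hMv, hm] at hne2
  have h8 : ((2 * m + 2 * p + 4 : ℕ) : ℂ) = 0 := by push_cast; linear_combination hne2
  rw [Nat.cast_eq_zero] at h8
  omega

/-- `F (E (F w)) = 0` implies `F w = 0` for an `sl₂`-triple of endomorphisms. -/
lemma key2 (E H F : Module.End ℂ V)
    (hE : H * E = E * H + (2 : ℂ) • E) (hF : H * F = F * H - (2 : ℂ) • F)
    (hH : E * F = F * E + H) (w : V) (h0 : F (E (F w)) = 0) : F w = 0 := by
  have s1 : (-H) * F = F * (-H) + (2 : ℂ) • F := by
    rw [neg_mul, mul_neg, hF]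
    module
  have s2 : (-H) * E = E * (-H) - (2 : ℂ) • E := by
    rw [neg_mul, mul_neg, hE]
    module
  have s3 : F * E = E * F + -H := by rw [hH]; abel
  have hEF0 : E (F w) = 0 := key F (-H) E s1 s2 s3 _ ⟨F w, rfl⟩ h0
  exact key E H F hE hF hH _ ⟨w, rfl⟩ hEF0

section RingLemmas

variable {R : Type*} [Ring R]

lemma ringL1 {a b c : R} (h : a * b - b * a = c) (X : R) :
    a * (b * X - X * b) - (b * X - X * b) * a - (b * (a * X - X * a) - (a * X - X * a) * b) =
      c * X - X * c := by
  rw [← h]; noncomm_ring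

lemma ringL2 {a b c : R} (h : a * b - b * a = c) (X : R) :
    a * (b * X + X * b) - (b * X + X * b) * a - (b * (a * X - X * a) + (a * X - X * a) * b) =
      c * X + X * c := by
  rw [← h]; noncomm_ring

lemma ringL3 {a b c : R} (h : a * b - b * a = c) (X : R) :
    a * (b * X + X * b) + (b * X + X * b) * a - (b * (a * X + X * a) + (a * X + X * a) * b) =
      c * X - X * c := by
  rw [← h]; noncomm_ring

end RingLemmas

variable {n : ℕ}

/-- The commutator action operator `X ↦ aX - Xa`. -/
noncomputable def opC (a : Matrix (Fin n) (Fin n) ℂ) :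
    Module.End ℂ (Matrix (Fin n) (Fin n) ℂ) :=
  LinearMap.mulLeft ℂ a - LinearMap.mulRight ℂ a

/-- The anticommutator action operator `X ↦ aX + Xa`. -/
noncomputable def opA (a : Matrix (Fin n) (Fin n) ℂ) :
    Module.End ℂ (Matrix (Fin n) (Fin n) ℂ) :=
  LinearMap.mulLeft ℂ a + LinearMap.mulRight ℂ a

@[simp] lemma opC_apply (a X : Matrix (Fin n) (Fin n) ℂ) : opC a X = a * X - X * a := rfl

@[simp] lemma opA_apply (a X : Matrix (Fin n) (Fin n) ℂ) : opA a X = a * X + X * a := rfl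

lemma nsmul_to_csmul (x : Matrix (Fin n) (Fin n) ℂ) : (2 : ℕ) • x = (2 : ℂ) • x := by
  rw [two_nsmul, two_smul]

lemma trace_forall_eq_zero {M : Matrix (Fin n) (Fin n) ℂ}
    (hM : ∀ C, Matrix.trace (C * M) = 0) : M = 0 := by
  ext i j
  have h1 := hM (Matrix.single j i 1)
  rw [Matrix.trace] at h1
  classical
  rw [Finset.sum_eq_single j] at h1
  · simpa [Matrix.diag] using h1
  · intro b _ hb
    simp [Matrix.diag, Matrix.single_mul_apply_of_ne, hb]
  · intro hj
    exact absurd (Finset.mem_univ j) hj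

end QSl2Aux

theorem stmt6 (n : ℕ) (e h f : Matrix (Fin n) (Fin n) ℂ)
    (h1 : h * e - e * h = 2 • e) (h2 : h * f - f * h = -(2 • f))
    (h3 : e * f - f * e = h) :
    ∀ p ∈ piBracketF f, (∀ q ∈ piBracketF f, omegaChi e p q = 0) → p = (0, 0) := by
  classical
  open QSl2Aux in
  rintro ⟨A, B⟩ ⟨C, D, hp⟩ hort
  injection hp with hA hB
  subst hA hB
  -- cyclic trace lemmas
  have cyc1 : ∀ a b c d : Matrix (Fin n) (Fin n) ℂ,
      Matrix.trace (a * b * c * d) = Matrix.trace (b * c * d * a) := by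
    intro a b c d
    calc Matrix.trace (a * b * c * d) = Matrix.trace (a * (b * c * d)) := by
          rw [show a * b * c * d = a * (b * c * d) by noncomm_ring]
      _ = Matrix.trace (b * c * d * a) := by rw [Matrix.trace_mul_comm]
  have cyc2 : ∀ a b c d : Matrix (Fin n) (Fin n) ℂ,
      Matrix.trace (a * b * c * d) = Matrix.trace (c * d * a * b) := by
    intro a b c d
    rw [cyc1 a b c d, cyc1 b c d a]
  have cyc3 : ∀ a b c d : Matrix (Fin n) (Fin n) ℂ,
      Matrix.trace (a * b * c * d) = Matrix.trace (d * a * b * c) := by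
    intro a b c d
    rw [cyc2 a b c d, cyc1 c d a b]
  -- relations for the commutator triple
  have relC1 : opC h * opC e = opC e * opC h + (2 : ℂ) • opC e := by
    apply LinearMap.ext
    intro X
    have L := ringL1 h1 X
    have hc : (2 • e) * X - X * (2 • e) = (2 : ℂ) • (e * X - X * e) := by
      rw [two_nsmul, two_smul]
      noncomm_ring
    rw [hc] at L
    simp only [Module.End.mul_apply, LinearMap.add_apply, LinearMap.smul_apply, opC_apply]
    linear_combination (norm := noncomm_ring) L
  have relC2 : opC h * opC f = opC f * opC h - (2 : ℂ) • opC f := by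
    apply LinearMap.ext
    intro X
    have L := ringL1 h2 X
    have hc : (-(2 • f)) * X - X * (-(2 • f)) = -((2 : ℂ) • (f * X - X * f)) := by
      rw [two_nsmul, two_smul]
      noncomm_ring
    rw [hc] at L
    simp only [Module.End.mul_apply, LinearMap.sub_apply, LinearMap.smul_apply, opC_apply]
    linear_combination (norm := noncomm_ring) L
  have relC3 : opC e * opC f = opC f * opC e + opC h := by
    apply LinearMap.ext
    intro X
    have L := ringL1 h3 X
    simp only [Module.End.mul_apply, LinearMap.add_apply, opC_apply]
    linear_combination (norm := noncomm_ring) L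
  -- relations for the twisted triple
  have relA1 : opC h * opA e = opA e * opC h + (2 : ℂ) • opA e := by
    apply LinearMap.ext
    intro X
    have L := ringL2 h1 X
    have hc : (2 • e) * X + X * (2 • e) = (2 : ℂ) • (e * X + X * e) := by
      rw [two_nsmul, two_smul]
      noncomm_ring
    rw [hc] at L
    simp only [Module.End.mul_apply, LinearMap.add_apply, LinearMap.smul_apply, opC_apply,
      opA_apply]
    linear_combination (norm := noncomm_ring) L
  have relA2 : opC h * opA f = opA f * opC h - (2 : ℂ) • opA f := by
    apply LinearMap.ext
    intro X
    have L := ringL2 h2 X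
    have hc : (-(2 • f)) * X + X * (-(2 • f)) = -((2 : ℂ) • (f * X + X * f)) := by
      rw [two_nsmul, two_smul]
      noncomm_ring
    rw [hc] at L
    simp only [Module.End.mul_apply, LinearMap.sub_apply, LinearMap.smul_apply, opC_apply,
      opA_apply]
    linear_combination (norm := noncomm_ring) L
  have relA3 : opA e * opA f = opA f * opA e + opC h := by
    apply LinearMap.ext
    intro X
    have L := ringL3 h3 X
    simp only [Module.End.mul_apply, LinearMap.add_apply, opC_apply, opA_apply]
    linear_combination (norm := noncomm_ring) L
  -- extract the orthogonality conditions
  have h_tr1 : ∀ X : Matrix (Fin n) (Fin n) ℂ,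
      Matrix.trace (X * (f * (e * (f * C - C * f) - (f * C - C * f) * e)
        - (e * (f * C - C * f) - (f * C - C * f) * e) * f)) = 0 := by
    intro X
    have hq := hort (f * X - X * f, 0) ⟨X, 0, by simp⟩
    rw [omegaChi] at hq
    simp only [mul_zero, zero_mul, add_zero] at hq
    set A := f * C - C * f with hAdef
    have hEq : Matrix.trace (X * (f * (e * A - A * e) - (e * A - A * e) * f))
        = - Matrix.trace (e * (A * (f * X - X * f) - (f * X - X * f) * A)) := by
      simp only [Matrix.mul_sub, Matrix.sub_mul, Matrix.trace_sub, ← mul_assoc]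
      rw [cyc3 e A f X, cyc2 e A X f, cyc2 e f X A, cyc1 e X f A]
      ring
    rw [hEq, hq, neg_zero]
  have h_tr2 : ∀ X : Matrix (Fin n) (Fin n) ℂ,
      Matrix.trace (X * (f * (e * (f * D + D * f) + (f * D + D * f) * e)
        + (e * (f * D + D * f) + (f * D + D * f) * e) * f)) = 0 := by
    intro X
    have hq := hort (0, f * X + X * f) ⟨0, X, by simp⟩
    rw [omegaChi] at hq
    simp only [mul_zero, zero_mul, sub_self, zero_add] at hq
    set B := f * D + D * f with hBdef
    have hEq : Matrix.trace (X * (f * (e * B + B * e) + (e * B + B * e) * f))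
        = Matrix.trace (e * (B * (f * X + X * f) + (f * X + X * f) * B)) := by
      simp only [Matrix.mul_add, Matrix.add_mul, Matrix.trace_add, ← mul_assoc]
      rw [cyc3 e B f X, cyc2 e B X f, cyc2 e f X B, cyc1 e X f B]
      ring
    rw [hEq, hq]
  -- conclude via the key lemma
  have hA0 : f * C - C * f = 0 := by
    have h0 : opC f (opC e (opC f C)) = 0 := by
      simp only [opC_apply]
      exact trace_forall_eq_zero h_tr1
    have := key2 (opC e) (opC h) (opC f) relC1 relC2 relC3 C h0
    simpa [opC_apply] using this
  have hB0 : f * D + D * f = 0 := by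
    have h0 : opA f (opA e (opA f D)) = 0 := by
      simp only [opA_apply]
      exact trace_forall_eq_zero h_tr2
    have := key2 (opA e) (opC h) (opA f) relA1 relA2 relA3 D h0
    simpa [opA_apply] using this
  simp [Prod.ext_iff, hA0, hB0]
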